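/- The beta invariant β(M) is non-negative for every matroid M. -/

import Mathlib

open Matroid

/-- Deletion of a set of elements from a matroid. -/
def mDelete (M : Matroid ℕ) (D : Set ℕ) : Matroid ℕ := M ↾ (M.E \ D)

/-- Contraction of a set of elements, defined by duality: `M ／ C = (M✶ ＼ C)✶`. -/
def mContract (M : Matroid ℕ) (C : Set ℕ) : Matroid ℕ := (mDelete M✶ C)✶

/-- `e` is a loop of `M`: an element of the ground set whose singleton is dependent. -/
def IsLoopE (M : Matroid ℕ) (e : ℕ) : Prop := e ∈ M.E ∧ ¬ M.Indep {e}

/-- `e` is a coloop of `M`: an element of the ground set lying in every base. -/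
def IsColoopE (M : Matroid ℕ) (e : ℕ) : Prop := e ∈ M.E ∧ ∀ B, M.IsBase B → e ∈ B

/-- `M` decomposes as the direct sum of its restrictions to `A` and `B`, where `A, B` is a
partition of the ground set into two nonempty parts: a set is independent iff its
intersections with `A` and with `B` are both independent. -/
def IsDirectSumDecomp (M : Matroid ℕ) (A B : Set ℕ) : Prop :=
  A.Nonempty ∧ B.Nonempty ∧ Disjoint A B ∧ A ∪ B = M.E ∧
    ∀ I ⊆ M.E, (M.Indep I ↔ M.Indep (I ∩ A) ∧ M.Indep (I ∩ B))

lemma mDelete_ground (M : Matroid ℕ) (D : Set ℕ) : (mDelete M D).E = M.E \ D := rfl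

lemma mContract_ground (M : Matroid ℕ) (C : Set ℕ) : (mContract M C).E = M.E \ C := by
  simp [mContract, mDelete]

/-- The beta invariant `β(M)` is non-negative for every (finite) matroid `M`. -/
theorem beta_nonneg (β : Matroid ℕ → ℤ)
    (hβe : β (Matroid.emptyOn ℕ) = 0)
    (hβ0 : ∀ e : ℕ, β (Matroid.loopyOn {e}) = 0)
    (hβ1 : ∀ e : ℕ, β (Matroid.freeOn {e}) = 1)
    (hβlc : ∀ M : Matroid ℕ, 2 ≤ M.E.encard → (∃ e, IsLoopE M e ∨ IsColoopE M e) → β M = 0)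
    (hβdc : ∀ (M : Matroid ℕ) (i : ℕ), i ∈ M.E → ¬ IsLoopE M i → ¬ IsColoopE M i →
      β M = β (mContract M {i}) + β (mDelete M {i}))
    (M : Matroid ℕ) (hfin : M.E.Finite) :
    0 ≤ β M := by
  suffices h : ∀ n (M : Matroid ℕ), M.E.Finite → M.E.ncard = n → 0 ≤ β M from
    h M.E.ncard M hfin rfl
  clear hfin M
  intro n
  induction n using Nat.strong_induction_on with
  | _ n IH =>
  intro M hfin hn
  match n, hn with
  | 0, hn =>
    have hE : M.E = ∅ := (Set.ncard_eq_zero hfin).mp hn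
    rw [Matroid.ground_eq_empty_iff.mp hE, hβe]
  | 1, hn =>
    obtain ⟨e, hE⟩ := Set.ncard_eq_one.mp hn
    by_cases hi : M.Indep {e}
    · have : M = Matroid.freeOn {e} := Matroid.eq_freeOn_iff.mpr ⟨hE, hE ▸ hi⟩
      rw [this, hβ1]; norm_num
    · have : M = Matroid.loopyOn {e} := by
        rw [Matroid.eq_loopyOn_iff]
        refine ⟨hE, fun X hX hXi => ?_⟩
        rw [hE] at hX
        rcases Set.subset_singleton_iff_eq.mp hX with h | h
        · exact h
        · exact absurd (h ▸ hXi) hi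
      rw [this, hβ0]
  | (m + 2), hn =>
    have h2 : 2 ≤ M.E.encard := by
      rw [← hfin.cast_ncard_eq, hn]
      exact_mod_cast Nat.le_add_left 2 m
    by_cases hlc : ∃ e, IsLoopE M e ∨ IsColoopE M e
    · rw [hβlc M h2 hlc]
    · push_neg at hlc
      have hne : M.E.Nonempty := by
        rw [← Set.ncard_pos hfin, hn]; omega
      obtain ⟨i, hi⟩ := hne
      have hl := (hlc i).1
      have hc := (hlc i).2
      rw [hβdc M i hi hl hc]
      have hlt : (M.E \ {i}).ncard < m + 2 := by
        rw [← hn]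
        exact Set.ncard_diff_singleton_lt_of_mem hi hfin
      have hdfin : (M.E \ {i}).Finite := hfin.diff
      have h1 : 0 ≤ β (mContract M {i}) := by
        apply IH _ hlt _ (by rw [mContract_ground]; exact hdfin)
        rw [mContract_ground]
      have h2' : 0 ≤ β (mDelete M {i}) := by
        apply IH _ hlt _ (by rw [mDelete_ground]; exact hdfin)
        rw [mDelete_ground]
      omega
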